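/- arXiv:2502.17375 — 4 statements merged into one kernel-verified Lean document; each statement's English description precedes it below -/
import Mathlib

section
/- Let (Ω, R, K) be a bidirectional kinetic system satisfying detailed balance with energy vector E (so log(K_{-R}/K_R) = Σ_i R(i)E(i) for all reactions R). Then a strictly positive vector N* ∈ (0,∞)^N is a steady state of the mass-action ODE system if and only if N*_i = e^{-E'(i)} for some vector E' satisfying Σ_i R(i)E'(i) = log(K_{-R}/K_R) for all reactions R, i.e. E' = E + m for some conservation law m. -/
open Finset

/-- `(1 - e^x) * x ≤ 0` for all real `x`. -/
lemma aux_one_sub_exp_mul_nonpos (x : ℝ) : (1 - Real.exp x) * x ≤ 0 := by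
  rcases le_or_gt x 0 with h | h
  · exact mul_nonpos_of_nonneg_of_nonpos (by nlinarith [Real.exp_le_one_iff.2 h]) h
  · exact mul_nonpos_of_nonpos_of_nonneg (by nlinarith [Real.one_le_exp h.le]) h.le

/-- In a mass-action kinetic system with detailed balance (energy `E`), a
strictly positive vector is a steady state iff it is of the form `e^{-E'}` for
an energy vector `E'` (i.e. `E' = E + m` for a conservation law `m`). -/
theorem stmt3 (N r : ℕ) (R : Fin r → Fin N → ℤ) (K Kr : Fin r → ℝ)
    (hK : ∀ j, 0 < K j) (hKr : ∀ j, 0 < Kr j)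
    (E : Fin N → ℝ)
    (hdb : ∀ j, Real.log (Kr j / K j) = ∑ i, (R j i : ℝ) * E i)
    (J : Fin r → (Fin N → ℝ) → ℝ)
    (hJ : ∀ j n, J j n =
      K j * ∏ i ∈ univ.filter (fun i => R j i < 0), n i ^ (-(R j i))
        - Kr j * ∏ i ∈ univ.filter (fun i => 0 < R j i), n i ^ (R j i))
    (Nstar : Fin N → ℝ) (hpos : ∀ i, 0 < Nstar i) :
    (∀ ℓ, ∑ j, (R j ℓ : ℝ) * J j Nstar = 0) ↔
      ∃ E' : Fin N → ℝ,
        (∀ j, ∑ i, (R j i : ℝ) * E' i = Real.log (Kr j / K j)) ∧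
        ∀ i, Nstar i = Real.exp (-(E' i)) := by
  set L : Fin N → ℝ := fun i => Real.log (Nstar i) with hLdef
  -- power as exponential
  have hzpow : ∀ (m : ℤ) (i : Fin N), Nstar i ^ m = Real.exp ((m : ℝ) * L i) := by
    intro m i
    rw [← Real.rpow_intCast (Nstar i) m, Real.rpow_def_of_pos (hpos i), mul_comm]
  -- Kr in terms of K
  have hKrK : ∀ j, Kr j = K j * Real.exp (∑ i, (R j i : ℝ) * E i) := by
    intro j
    have h := Real.exp_log (div_pos (hKr j) (hK j))
    rw [hdb j] at h
    rw [h, mul_comm, div_mul_cancel₀ _ (ne_of_gt (hK j))]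
  -- splitting the sum of R * L over positive/negative parts
  have hsplit : ∀ j, (∑ i, (R j i : ℝ) * L i) =
      (∑ i ∈ univ.filter (fun i => 0 < R j i), (R j i : ℝ) * L i)
      + (∑ i ∈ univ.filter (fun i => R j i < 0), (R j i : ℝ) * L i) := by
    intro j
    rw [← Finset.sum_filter_add_sum_filter_not univ (fun i => 0 < R j i)
      (fun i => (R j i : ℝ) * L i)]
    congr 1
    refine (Finset.sum_subset ?_ ?_).symm
    · intro i hi
      simp only [mem_filter, mem_univ, true_and] at hi ⊢
      omega
    · intro i hi hni
      simp only [mem_filter, mem_univ, true_and] at hi hni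
      have : R j i = 0 := by omega
      simp [this]
  -- the flux formula
  have hflux : ∀ j, J j Nstar =
      K j * Real.exp (-(∑ i ∈ univ.filter (fun i => R j i < 0), (R j i : ℝ) * L i)) *
        (1 - Real.exp (∑ i, (R j i : ℝ) * (E i + L i))) := by
    intro j
    rw [hJ j Nstar]
    have h1 : (∏ i ∈ univ.filter (fun i => R j i < 0), Nstar i ^ (-(R j i)))
        = Real.exp (-(∑ i ∈ univ.filter (fun i => R j i < 0), (R j i : ℝ) * L i)) := by
      rw [← Finset.sum_neg_distrib, Real.exp_sum]
      refine Finset.prod_congr rfl fun i _ => ?_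
      rw [hzpow]
      push_cast
      ring_nf
    have h2 : (∏ i ∈ univ.filter (fun i => 0 < R j i), Nstar i ^ (R j i))
        = Real.exp (∑ i ∈ univ.filter (fun i => 0 < R j i), (R j i : ℝ) * L i) := by
      rw [Real.exp_sum]
      exact Finset.prod_congr rfl fun i _ => hzpow _ _
    rw [h1, h2, hKrK j]
    have hRel : ∑ i, (R j i : ℝ) * (E i + L i)
        = (∑ i, (R j i : ℝ) * E i)
          + ((∑ i ∈ univ.filter (fun i => 0 < R j i), (R j i : ℝ) * L i)
            + (∑ i ∈ univ.filter (fun i => R j i < 0), (R j i : ℝ) * L i)) := by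
      rw [← hsplit j, ← Finset.sum_add_distrib]
      exact Finset.sum_congr rfl fun i _ => by ring
    rw [hRel]
    generalize (∑ i, (R j i : ℝ) * E i) = S
    generalize (∑ i ∈ univ.filter (fun i => 0 < R j i), (R j i : ℝ) * L i) = Q
    generalize (∑ i ∈ univ.filter (fun i => R j i < 0), (R j i : ℝ) * L i) = P
    have e1 : Real.exp (-P) * Real.exp (S + (Q + P)) = Real.exp S * Real.exp Q := by
      rw [← Real.exp_add, ← Real.exp_add]
      congr 1
      ring
    linear_combination K j * e1
  constructor
  · -- forward direction
    intro h
    set D : Fin r → ℝ := fun j => ∑ i, (R j i : ℝ) * (E i + L i) with hDdef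
    have hsum0 : ∑ j, J j Nstar * D j = 0 := by
      have key : ∑ j, J j Nstar * D j
          = ∑ i, (E i + L i) * (∑ j, (R j i : ℝ) * J j Nstar) := by
        simp only [hDdef, Finset.mul_sum]
        rw [Finset.sum_comm]
        exact Finset.sum_congr rfl fun i _ => Finset.sum_congr rfl fun j _ => by ring
      rw [key]
      simp [h]
    have hnonpos : ∀ j ∈ (univ : Finset (Fin r)), J j Nstar * D j ≤ 0 := by
      intro j _
      rw [hflux j, mul_assoc]
      exact mul_nonpos_of_nonneg_of_nonpos
        (le_of_lt (mul_pos (hK j) (Real.exp_pos _)))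
        (aux_one_sub_exp_mul_nonpos (D j))
    have heach := (Finset.sum_eq_zero_iff_of_nonpos hnonpos).1 hsum0
    have hD0 : ∀ j, D j = 0 := by
      intro j
      have h0 := heach j (mem_univ j)
      rw [hflux j, mul_assoc] at h0
      have hne : K j * Real.exp (-(∑ i ∈ univ.filter (fun i => R j i < 0),
          (R j i : ℝ) * L i)) ≠ 0 :=
        ne_of_gt (mul_pos (hK j) (Real.exp_pos _))
      have h0' : (1 - Real.exp (D j)) * D j = 0 := by
        rcases mul_eq_zero.1 h0 with hc | hc
        · exact absurd hc hne
        · exact hc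
      rcases mul_eq_zero.1 h0' with hc | hc
      · have : Real.exp (D j) = 1 := by linarith
        exact (Real.exp_eq_one_iff (D j)).1 this
      · exact hc
    refine ⟨fun i => -(L i), fun j => ?_, fun i => ?_⟩
    · have hD : ∑ i, (R j i : ℝ) * (E i + L i) = 0 := hD0 j
      have hsplit2 : (∑ i, (R j i : ℝ) * (E i + L i))
          = (∑ i, (R j i : ℝ) * E i) + (∑ i, (R j i : ℝ) * L i) := by
        rw [← Finset.sum_add_distrib]
        exact Finset.sum_congr rfl fun i _ => by ring
      rw [hsplit2] at hD
      show ∑ i, (R j i : ℝ) * -(L i) = Real.log (Kr j / K j)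
      calc ∑ i, (R j i : ℝ) * -(L i) = -∑ i, (R j i : ℝ) * L i := by
            rw [← Finset.sum_neg_distrib]
            exact Finset.sum_congr rfl fun i _ => by ring
        _ = ∑ i, (R j i : ℝ) * E i := by linarith
        _ = Real.log (Kr j / K j) := (hdb j).symm
    · simp only [neg_neg, hLdef]
      exact (Real.exp_log (hpos i)).symm
  · -- converse
    rintro ⟨E', h1, h2⟩ ℓ
    have hL : ∀ i, L i = -(E' i) := by
      intro i
      simp [hLdef, h2 i, Real.log_exp]
    have hJ0 : ∀ j, J j Nstar = 0 := by
      intro j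
      rw [hflux j]
      have : ∑ i, (R j i : ℝ) * (E i + L i) = 0 := by
        have : ∑ i, (R j i : ℝ) * (E i + L i)
            = (∑ i, (R j i : ℝ) * E i) - (∑ i, (R j i : ℝ) * E' i) := by
          rw [← Finset.sum_sub_distrib]
          exact Finset.sum_congr rfl fun i _ => by rw [hL i]; ring
        rw [this, h1 j, ← hdb j, sub_self]
      rw [this, Real.exp_zero, sub_self, mul_zero]
    simp [hJ0]
end

section
/- Consider the ODE system ṅ_2 = f(t) − (α+1)n_2 + n_3 n_4, ṅ_3 = f(t) − α n_3 + n_2 − n_3 n_4, ṅ_4 = n_2 − n_3 n_4, with α > 0, f continuous, and initial data n_2(0) = n_3(0) = f(0)/α, n_4(0) = 1. Then the quantity g(t) = n_2(t) − n_3(t)n_4(t) satisfies g(t) = 0 for all t ≥ 0, and consequently n_4(t) = 1 for all t ≥ 0 (assuming the solution exists and remains finite on [0,∞)). -/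
open Set Real

/-- Example 3.2: for the fine-tuned signalling system, the quantity
`n₂ - n₃ n₄` vanishes identically and hence `n₄ ≡ 1`: the system does not
respond to the signal. -/
theorem stmt6 (α : ℝ) (hα : 0 < α) (f : ℝ → ℝ) (hf : Continuous f)
    (n2 n3 n4 : ℝ → ℝ)
    (h2 : ∀ t ≥ (0:ℝ), HasDerivAt n2 (f t - (α + 1) * n2 t + n3 t * n4 t) t)
    (h3 : ∀ t ≥ (0:ℝ), HasDerivAt n3 (f t - α * n3 t + n2 t - n3 t * n4 t) t)
    (h4 : ∀ t ≥ (0:ℝ), HasDerivAt n4 (n2 t - n3 t * n4 t) t)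
    (i2 : n2 0 = f 0 / α) (i3 : n3 0 = f 0 / α) (i4 : n4 0 = 1) :
    ∀ t ≥ (0:ℝ), n2 t - n3 t * n4 t = 0 ∧ n4 t = 1 := by
  intro T hT
  -- the combined quantity F = (g, h) = (n2 - n3 n4, 1 - n4)
  set F : ℝ → ℝ × ℝ := fun t => (n2 t - n3 t * n4 t, 1 - n4 t) with hF
  set F' : ℝ → ℝ × ℝ := fun t =>
    (f t * (1 - n4 t) - (1 + α + n4 t + n3 t) * (n2 t - n3 t * n4 t),
      -(n2 t - n3 t * n4 t)) with hF'
  have hderiv : ∀ t ≥ (0:ℝ), HasDerivAt F (F' t) t := by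
    intro t ht
    have hg : HasDerivAt (fun t => n2 t - n3 t * n4 t)
        (f t * (1 - n4 t) - (1 + α + n4 t + n3 t) * (n2 t - n3 t * n4 t)) t := by
      have : HasDerivAt (fun t => n2 t - n3 t * n4 t) _ t := (h2 t ht).sub ((h3 t ht).mul (h4 t ht))
      convert this using 1
      ring
    have hh : HasDerivAt (fun t => 1 - n4 t) (-(n2 t - n3 t * n4 t)) t := by
      have : HasDerivAt (fun t => 1 - n4 t) _ t := (hasDerivAt_const t (1:ℝ)).sub (h4 t ht)
      simpa using this
    exact hg.prodMk hh
  -- continuity of the data on [0, T]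
  have hcont : ∀ (u : ℝ → ℝ), (∀ t ≥ (0:ℝ), ∃ d, HasDerivAt u d t) →
      ContinuousOn u (Icc 0 T) := by
    intro u hu t ht
    obtain ⟨d, hd⟩ := hu t ht.1
    exact hd.continuousAt.continuousWithinAt
  have hc2 : ContinuousOn n2 (Icc 0 T) := hcont n2 fun t ht => ⟨_, h2 t ht⟩
  have hc3 : ContinuousOn n3 (Icc 0 T) := hcont n3 fun t ht => ⟨_, h3 t ht⟩
  have hc4 : ContinuousOn n4 (Icc 0 T) := hcont n4 fun t ht => ⟨_, h4 t ht⟩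
  -- bounds on the coefficients
  obtain ⟨M1, hM1⟩ := (isCompact_Icc (a := (0:ℝ)) (b := T)).exists_bound_of_continuousOn
    hf.continuousOn
  have hcoef : ContinuousOn (fun t => 1 + α + n4 t + n3 t) (Icc 0 T) :=
    ((continuousOn_const.add hc4)).add hc3
  obtain ⟨M2, hM2⟩ := (isCompact_Icc (a := (0:ℝ)) (b := T)).exists_bound_of_continuousOn hcoef
  set K : ℝ := 2 * max (max M1 M2) 1 with hK
  have hK1 : (1:ℝ) ≤ K := by
    have : (1:ℝ) ≤ max (max M1 M2) 1 := le_max_right _ _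
    nlinarith
  have hKM1 : ∀ x ∈ Icc (0:ℝ) T, |f x| ≤ K / 2 := by
    intro x hx
    have := hM1 x hx
    simp only [Real.norm_eq_abs] at this
    have h1 : M1 ≤ max (max M1 M2) 1 := le_trans (le_max_left _ _) (le_max_left _ _)
    rw [hK]; linarith
  have hKM2 : ∀ x ∈ Icc (0:ℝ) T, |1 + α + n4 x + n3 x| ≤ K / 2 := by
    intro x hx
    have := hM2 x hx
    simp only [Real.norm_eq_abs] at this
    have h1 : M2 ≤ max (max M1 M2) 1 := le_trans (le_max_right _ _) (le_max_left _ _)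
    rw [hK]; linarith
  -- Grönwall
  have hFc : ContinuousOn F (Icc 0 T) := by
    apply ContinuousOn.prodMk
    · exact hc2.sub (hc3.mul hc4)
    · exact continuousOn_const.sub hc4
  have hF0 : ‖F 0‖ ≤ 0 := by
    have : F 0 = (0, 0) := by
      simp only [hF, i2, i3, i4]
      norm_num
    rw [this]
    simp [Prod.norm_def]
  have hbound : ∀ x ∈ Ico (0:ℝ) T, ‖F' x‖ ≤ K * ‖F x‖ + 0 := by
    intro x hx
    have hx' : x ∈ Icc (0:ℝ) T := ⟨hx.1, hx.2.le⟩
    have hg : |n2 x - n3 x * n4 x| ≤ ‖F x‖ := le_max_left _ _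
    have hh : |1 - n4 x| ≤ ‖F x‖ := le_max_right _ _
    have hFnn : (0:ℝ) ≤ ‖F x‖ := norm_nonneg _
    rw [add_zero, Prod.norm_def]
    simp only [Real.norm_eq_abs]
    apply max_le
    · calc |f x * (1 - n4 x) - (1 + α + n4 x + n3 x) * (n2 x - n3 x * n4 x)|
          ≤ |f x * (1 - n4 x)| + |(1 + α + n4 x + n3 x) * (n2 x - n3 x * n4 x)| :=
            abs_sub _ _
        _ = |f x| * |1 - n4 x| + |1 + α + n4 x + n3 x| * |n2 x - n3 x * n4 x| := by
            rw [abs_mul, abs_mul]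
        _ ≤ (K / 2) * ‖F x‖ + (K / 2) * ‖F x‖ := by
            apply add_le_add
            · exact mul_le_mul (hKM1 x hx') hh (abs_nonneg _)
                (by linarith [hKM1 x hx', abs_nonneg (f x)])
            · exact mul_le_mul (hKM2 x hx') hg (abs_nonneg _)
                (by linarith [hKM2 x hx', abs_nonneg (1 + α + n4 x + n3 x)])
        _ = K * ‖F x‖ := by ring
    · calc |-(n2 x - n3 x * n4 x)| = |n2 x - n3 x * n4 x| := abs_neg _
        _ ≤ 1 * ‖F x‖ := by linarith
        _ ≤ K * ‖F x‖ := by nlinarith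
  have := norm_le_gronwallBound_of_norm_deriv_right_le (f := F) (f' := F')
    (δ := 0) (K := K) (ε := 0) (a := 0) (b := T) hFc
    (fun x hx => (hderiv x hx.1).hasDerivWithinAt) hF0 hbound T ⟨hT, le_refl T⟩
  rw [gronwallBound_ε0, zero_mul] at this
  have hFT : F T = 0 := by
    rwa [← norm_le_zero_iff]
  have h1 : n2 T - n3 T * n4 T = 0 := congrArg Prod.fst hFT
  have h2' : 1 - n4 T = 0 := congrArg Prod.snd hFT
  exact ⟨h1, by linarith⟩
end

section
/- Consider the solution of the linear system φ_1(t) = c·t (c > 0), dφ_ℓ/dt = Σ_j A_{ℓj} φ_j for ℓ ∈ Ω\{1}, with φ_ℓ(0) = 0 for ℓ ≠ 1, where A is a real matrix. Suppose the index set Ω is layered as S_0 = {1}, S_1, ..., S_L with A_{ℓj} = 0 whenever ℓ ∈ S_n and j ∈ S_m with |n−m| ≥ 2 (adjacency only between consecutive layers or within reach). Then for ℓ ∈ S_n the Taylor expansion at t = 0 is φ_ℓ(t) = c_{n,ℓ} t^{n+1} + o(t^{n+1}) with c_{n,ℓ} = (c/(n+1)!)·Σ over chains (j_0=1, j_1 ∈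 S_1, ..., j_{n-1} ∈ S_{n-1}) of A_{ℓ j_{n-1}} A_{j_{n-1} j_{n-2}} ··· A_{j_1 j_0}. -/
open Finset Asymptotics
open scoped Classical

noncomputable def chainSum {Nn : ℕ} (layer : Fin Nn → ℕ) (v0 : Fin Nn)
    (A : Matrix (Fin Nn) (Fin Nn) ℝ) (n : ℕ) (ℓ : Fin Nn) : ℝ :=
  ∑ j ∈ Finset.univ.filter (fun j : Fin (n + 1) → Fin Nn =>
      j 0 = v0 ∧ j (Fin.last n) = ℓ ∧ ∀ i : Fin (n + 1), layer (j i) = i),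
    ∏ i : Fin n, A (j i.succ) (j i.castSucc)

lemma chainSum_zero {Nn : ℕ} (layer : Fin Nn → ℕ) (v0 : Fin Nn)
    (A : Matrix (Fin Nn) (Fin Nn) ℝ) (hl0 : layer v0 = 0) :
    chainSum layer v0 A 0 v0 = 1 := by
  unfold chainSum
  have hset : (Finset.univ.filter (fun j : Fin 1 → Fin Nn =>
      j 0 = v0 ∧ j (Fin.last 0) = v0 ∧ ∀ i : Fin 1, layer (j i) = i))
      = {fun _ => v0} := by
    ext j
    simp only [Finset.mem_filter, Finset.mem_univ, true_and, Finset.mem_singleton]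
    constructor
    · rintro ⟨h0, -, -⟩
      funext i
      have : i = 0 := Subsingleton.elim _ _
      rw [this, h0]
    · rintro rfl
      refine ⟨rfl, rfl, fun i => ?_⟩
      have : i = 0 := Subsingleton.elim _ _
      simp [this, hl0]
  rw [hset]
  simp

lemma chainSum_succ {Nn : ℕ} (layer : Fin Nn → ℕ) (v0 : Fin Nn)
    (A : Matrix (Fin Nn) (Fin Nn) ℝ) (n : ℕ) (ℓ : Fin Nn) (hℓ : layer ℓ = n + 1) :
    chainSum layer v0 A (n + 1) ℓ =
      ∑ k ∈ Finset.univ.filter (fun k => layer k = n),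
        A ℓ k * chainSum layer v0 A n k := by
  have step1 : chainSum layer v0 A (n + 1) ℓ =
      ∑ j' ∈ Finset.univ.filter (fun j' : Fin (n + 1) → Fin Nn =>
          j' 0 = v0 ∧ ∀ i : Fin (n + 1), layer (j' i) = i),
        A ℓ (j' (Fin.last n)) * ∏ i : Fin n, A (j' i.succ) (j' i.castSucc) := by
    unfold chainSum
    refine Finset.sum_nbij' (fun j => Fin.init j) (fun j' => Fin.snoc j' ℓ) ?_ ?_ ?_ ?_ ?_
    · intro j hj
      simp only [Finset.mem_filter, Finset.mem_univ, true_and] at hj ⊢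
      obtain ⟨h0, hlast, hlay⟩ := hj
      refine ⟨?_, fun i => ?_⟩
      · show j (Fin.castSucc 0) = v0
        rwa [Fin.castSucc_zero]
      · show layer (j i.castSucc) = i
        rw [hlay i.castSucc, Fin.coe_castSucc]
    · intro j' hj'
      simp only [Finset.mem_filter, Finset.mem_univ, true_and] at hj' ⊢
      obtain ⟨h0, hlay⟩ := hj'
      refine ⟨?_, ?_, fun i => ?_⟩
      · have h2 := Fin.snoc_castSucc (α := fun _ : Fin (n+2) => Fin Nn) (p := j') (x := ℓ) (i := 0)
        rw [Fin.castSucc_zero] at h2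
        exact h2.trans h0
      · exact Fin.snoc_last _ _
      · refine Fin.lastCases ?_ (fun i' => ?_) i
        · rw [Fin.snoc_last, Fin.val_last]; exact hℓ
        · rw [Fin.snoc_castSucc, Fin.coe_castSucc]; exact hlay i'
    · intro j hj
      simp only [Finset.mem_filter, Finset.mem_univ, true_and] at hj
      rw [← hj.2.1]; exact Fin.snoc_init_self j
    · intro j' _
      simp
    · intro j hj
      simp only [Finset.mem_filter, Finset.mem_univ, true_and] at hj
      rw [Fin.prod_univ_castSucc, mul_comm]
      refine congrArg₂ (· * ·) ?_ ?_
      · show A (j (Fin.last n).succ) (j (Fin.last n).castSucc)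
            = A ℓ (j (Fin.last n).castSucc)
        rw [Fin.succ_last, hj.2.1]
      · refine Finset.prod_congr rfl fun i _ => ?_
        show A (j i.castSucc.succ) (j i.castSucc.castSucc)
            = A (j i.succ.castSucc) (j i.castSucc.castSucc)
        rw [Fin.succ_castSucc]
  rw [step1]
  rw [← Finset.sum_fiberwise_of_maps_to (g := fun j' : Fin (n+1) → Fin Nn => j' (Fin.last n))
      (t := Finset.univ.filter fun k => layer k = n) ?hmap]
  case hmap =>
    intro j' hj'
    simp only [Finset.mem_filter, Finset.mem_univ, true_and] at hj' ⊢
    rw [hj'.2 (Fin.last n), Fin.val_last]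
  refine Finset.sum_congr rfl fun k hk => ?_
  unfold chainSum
  rw [Finset.mul_sum, Finset.filter_filter]
  refine Finset.sum_congr ?_ fun j' hj' => ?_
  · apply Finset.filter_congr
    intro j' _
    constructor
    · rintro ⟨⟨h0, hlay⟩, hlast⟩; exact ⟨h0, hlast, hlay⟩
    · rintro ⟨h0, hlast, hlay⟩; exact ⟨⟨h0, hlay⟩, hlast⟩
  · simp only [Finset.mem_filter, Finset.mem_univ, true_and] at hj'
    rw [hj'.2.1]

lemma integ_littleO {f g : ℝ → ℝ} {n : ℕ}
    (hf : ∀ t, HasDerivAt f (g t) t) (hf0 : f 0 = 0) (hg0 : g 0 = 0)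
    (hg : g =o[nhdsWithin 0 (Set.Ioi 0)] fun t => t ^ n) :
    f =o[nhdsWithin 0 (Set.Ioi 0)] fun t => t ^ (n + 1) := by
  rw [isLittleO_iff] at hg ⊢
  intro ε hε
  have h1 := hg hε
  rw [eventually_nhdsWithin_iff, Metric.eventually_nhds_iff] at h1 ⊢
  obtain ⟨δ, hδ, hbd⟩ := h1
  refine ⟨δ, hδ, fun t ht htpos => ?_⟩
  have ht0 : (0:ℝ) < t := htpos
  have htδ : t < δ := by
    rw [Real.dist_eq, sub_zero, abs_of_pos ht0] at ht; exact ht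
  have key : ∀ s ∈ Set.Icc (0:ℝ) t, ‖g s‖ ≤ ε * t ^ n := by
    intro s hs
    rcases eq_or_lt_of_le hs.1 with h | h
    · rw [← h, hg0, norm_zero]; positivity
    · have hsδ : dist s 0 < δ := by
        rw [Real.dist_eq, sub_zero, abs_of_pos h]; exact lt_of_le_of_lt hs.2 htδ
      calc ‖g s‖ ≤ ε * ‖s ^ n‖ := hbd hsδ h
        _ ≤ ε * t ^ n := by
            rw [norm_pow, Real.norm_eq_abs, abs_of_pos h]
            exact mul_le_mul_of_nonneg_left (pow_le_pow_left₀ h.le hs.2 n) hε.le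
  have hmvt := Convex.norm_image_sub_le_of_norm_hasDerivWithin_le
    (fun s _ => (hf s).hasDerivWithinAt) key (convex_Icc 0 t)
    (Set.left_mem_Icc.mpr ht0.le) (Set.right_mem_Icc.mpr ht0.le)
  rw [hf0, sub_zero, sub_zero] at hmvt
  calc ‖f t‖ ≤ ε * t ^ n * t := by
        simpa [Real.norm_eq_abs, abs_of_pos ht0] using hmvt
    _ = ε * ‖t ^ (n+1)‖ := by
        rw [norm_pow, Real.norm_eq_abs, abs_of_pos ht0]; ring

section Main

variable {Nn : ℕ} {layer : Fin Nn → ℕ} {v0 : Fin Nn}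
    {A : Matrix (Fin Nn) (Fin Nn) ℝ} {c : ℝ} {φ : Fin Nn → ℝ → ℝ}

lemma crude (hl0 : layer v0 = 0)
    (hA : ∀ ℓ j, 2 ≤ |(layer ℓ : ℤ) - (layer j : ℤ)| → A ℓ j = 0)
    (hφ1 : ∀ t, φ v0 t = c * t)
    (hode : ∀ ℓ, ℓ ≠ v0 → ∀ t, HasDerivAt (φ ℓ) (∑ j, A ℓ j * φ j t) t)
    (hinit : ∀ ℓ, ℓ ≠ v0 → φ ℓ 0 = 0) :
    ∀ n : ℕ, ∀ j, n ≤ layer j →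
      φ j =o[nhdsWithin 0 (Set.Ioi 0)] fun t => t ^ n := by
  have hz : ∀ k, φ k 0 = 0 := by
    intro k
    by_cases hk : k = v0
    · rw [hk, hφ1]; ring
    · exact hinit k hk
  intro n
  induction n with
  | zero =>
    intro j _
    have hcont : ContinuousAt (φ j) 0 := by
      by_cases hj : j = v0
      · have : φ j = fun t => c * t := by funext t; rw [hj, hφ1]
        rw [this]; fun_prop
      · exact (hode j hj 0).continuousAt
    have htd : Filter.Tendsto (φ j) (nhdsWithin 0 (Set.Ioi 0)) (nhds 0) := by
      have := hcont.tendsto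
      rw [hz j] at this
      exact this.mono_left nhdsWithin_le_nhds
    rw [show (fun t : ℝ => t ^ (0:ℕ)) = fun _ => (1:ℝ) from funext fun t => pow_zero t]
    exact (isLittleO_one_iff ℝ).mpr htd
  | succ n ih =>
    intro j hj
    have hjv : j ≠ v0 := by
      intro h; rw [h, hl0] at hj; omega
    refine integ_littleO (g := fun t => ∑ k, A j k * φ k t)
      (hode j hjv) (hz j) (by simp [hz]) ?_
    refine Asymptotics.IsLittleO.fun_sum fun k _ => ?_
    by_cases hAk : A j k = 0
    · simp only [hAk, zero_mul]
      exact isLittleO_zero _ _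
    · have hlk : n ≤ layer k := by
        by_contra hlt
        push_neg at hlt
        apply hAk
        apply hA
        have h1 : (n:ℤ) + 1 ≤ (layer j : ℤ) := by exact_mod_cast hj
        have h2 : (layer k : ℤ) ≤ (n:ℤ) - 1 := by
          have : (layer k : ℤ) < n := by exact_mod_cast hlt
          omega
        have : 2 ≤ (layer j : ℤ) - (layer k : ℤ) := by omega
        exact le_trans this (le_abs_self _)
      exact (ih k hlk).const_mul_left _

end Main

lemma mainQ {Nn : ℕ} {layer : Fin Nn → ℕ} {v0 : Fin Nn}
    {A : Matrix (Fin Nn) (Fin Nn) ℝ} {c : ℝ} {φ : Fin Nn → ℝ → ℝ}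
    (hl0 : layer v0 = 0) (hl0' : ∀ i, layer i = 0 → i = v0)
    (hA : ∀ ℓ j, 2 ≤ |(layer ℓ : ℤ) - (layer j : ℤ)| → A ℓ j = 0)
    (hφ1 : ∀ t, φ v0 t = c * t)
    (hode : ∀ ℓ, ℓ ≠ v0 → ∀ t, HasDerivAt (φ ℓ) (∑ j, A ℓ j * φ j t) t)
    (hinit : ∀ ℓ, ℓ ≠ v0 → φ ℓ 0 = 0) :
    ∀ n : ℕ, ∀ ℓ, layer ℓ = n →
      (fun t => φ ℓ t -
          (c / (Nat.factorial (n + 1) : ℝ) * chainSum layer v0 A n ℓ) * t ^ (n + 1))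
        =o[nhdsWithin 0 (Set.Ioi 0)] fun t => t ^ (n + 1) := by
  have hz : ∀ k, φ k 0 = 0 := by
    intro k
    by_cases hk : k = v0
    · rw [hk, hφ1]; ring
    · exact hinit k hk
  intro n
  induction n with
  | zero =>
    intro ℓ hℓ
    have hv : ℓ = v0 := hl0' ℓ hℓ
    have : (fun t => φ ℓ t -
        (c / (Nat.factorial 1 : ℝ) * chainSum layer v0 A 0 ℓ) * t ^ 1)
        = fun _ => (0:ℝ) := by
      funext t
      rw [hv, hφ1, chainSum_zero layer v0 A hl0]
      simp [Nat.factorial]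
    rw [this]
    exact isLittleO_zero _ _
  | succ n ih =>
    intro ℓ hℓ
    have hℓv : ℓ ≠ v0 := by
      intro h; rw [h, hl0] at hℓ; omega
    set a : ℝ := c / (Nat.factorial (n + 2) : ℝ) * chainSum layer v0 A (n + 1) ℓ with ha
    have hfac : (Nat.factorial (n + 2) : ℝ) = (n + 2) * (Nat.factorial (n + 1) : ℝ) := by
      rw [Nat.factorial_succ]; push_cast; ring
    have hfne : (Nat.factorial (n + 1) : ℝ) ≠ 0 := by positivity
    have hn2 : ((n : ℝ) + 2) ≠ 0 := by positivity
    -- key coefficient identity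
    have hkey : a * ((n : ℝ) + 2) =
        ∑ k, (if layer k = n then
          A ℓ k * (c / (Nat.factorial (n + 1) : ℝ) * chainSum layer v0 A n k) else 0) := by
      rw [← Finset.sum_filter, ha, chainSum_succ layer v0 A n ℓ hℓ, Finset.mul_sum,
        Finset.sum_mul]
      refine Finset.sum_congr rfl fun k _ => ?_
      rw [hfac]
      field_simp
    refine integ_littleO
      (g := fun t => (∑ k, A ℓ k * φ k t) - a * (((n : ℝ) + 2) * t ^ (n + 1)))
      (fun t => ?_) (by simp [hz ℓ]) (by simp [hz]) ?_
    · have h2 : HasDerivAt (fun t : ℝ => a * t ^ (n + 2))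
          (a * (((n : ℝ) + 2) * t ^ (n + 1))) t := by
        have := (hasDerivAt_pow (n + 2) t).const_mul a
        simpa using this
      exact (hode ℓ hℓv t).sub h2
    · have hrw : (fun t => (∑ k, A ℓ k * φ k t) - a * (((n : ℝ) + 2) * t ^ (n + 1)))
          = fun t => ∑ k, (A ℓ k * φ k t -
              (if layer k = n then
                A ℓ k * (c / (Nat.factorial (n + 1) : ℝ) * chainSum layer v0 A n k)
              else 0) * t ^ (n + 1)) := by
        funext t
        rw [Finset.sum_sub_distrib, ← Finset.sum_mul, ← hkey]
        ring
      rw [hrw]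
      refine Asymptotics.IsLittleO.fun_sum fun k _ => ?_
      by_cases hk : layer k = n
      · rw [if_pos hk]
        have := (ih k hk).const_mul_left (A ℓ k)
        refine this.congr' ?_ (by rfl)
        filter_upwards with t
        ring
      · simp only [if_neg hk, zero_mul, sub_zero]
        by_cases hAk : A ℓ k = 0
        · simp only [hAk, zero_mul, sub_zero]
          exact isLittleO_zero _ _
        · have hlk : n + 1 ≤ layer k := by
            by_contra hlt
            push_neg at hlt
            have hlt' : layer k < n := by omega
            apply hAk
            apply hA
            have h1 : (layer ℓ : ℤ) = (n : ℤ) + 1 := by exact_mod_cast hℓ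
            have h2 : (layer k : ℤ) < (n : ℤ) := by exact_mod_cast hlt'
            have : 2 ≤ (layer ℓ : ℤ) - (layer k : ℤ) := by omega
            exact le_trans this (le_abs_self _)
          have := (crude hl0 hA hφ1 hode hinit (n + 1) k hlk).const_mul_left (A ℓ k)
          simpa using this

/-- Hierarchy of responses: for the layered linear system driven by
`φ_{v0}(t) = c t`, a substance `ℓ` in layer `n` satisfies
`φ_ℓ(t) = c_{n,ℓ} t^{n+1} + o(t^{n+1})` as `t → 0⁺`, with
`c_{n,ℓ} = (c/(n+1)!) ∑_{chains} A_{ℓ j_{n-1}} ⋯ A_{j_1 j_0}`. -/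
theorem stmt14 (Nn : ℕ) (layer : Fin Nn → ℕ) (v0 : Fin Nn)
    (hl0 : layer v0 = 0) (hl0' : ∀ i, layer i = 0 → i = v0)
    (A : Matrix (Fin Nn) (Fin Nn) ℝ)
    (hA : ∀ ℓ j, 2 ≤ |(layer ℓ : ℤ) - (layer j : ℤ)| → A ℓ j = 0)
    (c : ℝ) (hc : 0 < c)
    (φ : Fin Nn → ℝ → ℝ)
    (hφ1 : ∀ t, φ v0 t = c * t)
    (hode : ∀ ℓ, ℓ ≠ v0 → ∀ t, HasDerivAt (φ ℓ) (∑ j, A ℓ j * φ j t) t)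
    (hinit : ∀ ℓ, ℓ ≠ v0 → φ ℓ 0 = 0)
    (ℓ : Fin Nn) (hℓ : ℓ ≠ v0) (n : ℕ) (hn : layer ℓ = n) :
    (fun t => φ ℓ t -
        (c / (Nat.factorial (n + 1) : ℝ) *
          ∑ j ∈ Finset.univ.filter (fun j : Fin (n + 1) → Fin Nn =>
              j 0 = v0 ∧ j (Fin.last n) = ℓ ∧ ∀ i : Fin (n + 1), layer (j i) = i),
            ∏ i : Fin n, A (j i.succ) (j i.castSucc)) * t ^ (n + 1))
      =o[nhdsWithin 0 (Set.Ioi 0)] fun t => t ^ (n + 1) := by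
  have h := mainQ hl0 hl0' hA hφ1 hode hinit n ℓ hn
  unfold chainSum at h
  exact h
end

section
/- For the network with species (1,...,4) and reactions (1)+(3) ⇌ (2)+(4), (1) ⇌ (2), (3) ⇌ (4), the conservation law space is exactly span{(1,1,0,0), (0,0,1,1)}. In particular the vectors m^{(1)} = (1,0) and m^{(4)} = (0,1) of coefficients of substances 1 and 4 in this basis are orthogonal, so substances 1 and 4 are not M-connected, even though the network's substance graph is connected. -/
open Matrix

/-- For the network (1)+(3)⇌(2)+(4), (1)⇌(2), (3)⇌(4): the conservation law
space is exactly span{(1,1,0,0),(0,0,1,1)}; the coefficient vectors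
`m^{(1)} = (1,0)` and `m^{(4)} = (0,1)` of substances 1 and 4 in this basis are
orthogonal (so 1 and 4 are not M-connected), although the substance graph is
connected. -/
theorem stmt17 (R : Fin 3 → Fin 4 → ℝ)
    (hR : R = ![![-1,1,-1,1], ![-1,1,0,0], ![0,0,-1,1]])
    (m1 m2 : Fin 4 → ℝ) (hm1 : m1 = ![1,1,0,0]) (hm2 : m2 = ![0,0,1,1]) :
    ({m : Fin 4 → ℝ | ∀ j, m ⬝ᵥ R j = 0} =
      ↑(Submodule.span ℝ {m1, m2} : Submodule ℝ (Fin 4 → ℝ))) ∧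
    (m1 0 * m1 3 + m2 0 * m2 3 = 0) ∧
    (SimpleGraph.fromRel
      (fun i k : Fin 4 => ∃ j, R j i ≠ 0 ∧ R j k ≠ 0)).Connected := by
  subst hR hm1 hm2
  refine ⟨?_, by norm_num; rfl, ?_⟩
  · ext m
    simp only [Set.mem_setOf_eq, SetLike.mem_coe, Submodule.mem_span_pair]
    constructor
    · intro h
      have h1 := h 1
      have h2 := h 2
      simp [dotProduct, Fin.sum_univ_four] at h1 h2
      refine ⟨m 0, m 2, ?_⟩
      funext i
      fin_cases i <;> simp <;> linarith
    · rintro ⟨a, b, rfl⟩ j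
      fin_cases j <;> simp [dotProduct, Fin.sum_univ_four]
  · have hadj : ∀ u v : Fin 4, u ≠ v →
        (SimpleGraph.fromRel
          (fun i k : Fin 4 => ∃ j, (![![(-1:ℝ),1,-1,1], ![-1,1,0,0], ![0,0,-1,1]]) j i ≠ 0 ∧
            (![![(-1:ℝ),1,-1,1], ![-1,1,0,0], ![0,0,-1,1]]) j k ≠ 0)).Adj u v := by
      intro u v huv
      refine ⟨huv, Or.inl ⟨0, ?_, ?_⟩⟩ <;> fin_cases u <;> fin_cases v <;> norm_num
    constructor
    intro u v
    rcases eq_or_ne u v with rfl | h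
    · exact SimpleGraph.Reachable.refl u
    · exact (hadj u v h).reachable
end
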